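/- Adequacy theorem for C_ω with respect to Fidel semantics: for every set of formulas Γ ∪ {α} of C_ω, Γ ⊢ α in C_ω if and only if Γ ⊨ α, i.e. for every C_ω-structure ⟨A, N⟩ and every C_ω-valuation v on it such that v(β) = 1 for all β ∈ Γ, one has v(α) = 1. -/

import Mathlib

universe u

inductive Fm : Type where
  | var (p : Nat) : Fm
  | and (a b : Fm) : Fm
  | or (a b : Fm) : Fm
  | imp (a b : Fm) : Fm
  | neg (a : Fm) : Fm

inductive Deriv (Γ : Set Fm) : Fm → Prop where
  | hyp {a : Fm} : a ∈ Γ → Deriv Γ a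
  | a1 (a b : Fm) : Deriv Γ (a.imp (b.imp a))
  | a2 (a b c : Fm) : Deriv Γ ((a.imp (b.imp c)).imp ((a.imp b).imp (a.imp c)))
  | a3 (a b : Fm) : Deriv Γ ((a.and b).imp a)
  | a4 (a b : Fm) : Deriv Γ ((a.and b).imp b)
  | a5 (a b : Fm) : Deriv Γ (a.imp (b.imp (a.and b)))
  | a6 (a b : Fm) : Deriv Γ (a.imp (a.or b))
  | a7 (a b : Fm) : Deriv Γ (b.imp (a.or b))
  | a8 (a b c : Fm) : Deriv Γ ((a.imp c).imp ((b.imp c).imp ((a.or b).imp c)))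
  | a9 (a : Fm) : Deriv Γ (a.or a.neg)
  | a10 (a : Fm) : Deriv Γ (a.neg.neg.imp a)
  | mp {a b : Fm} : Deriv Γ (a.imp b) → Deriv Γ a → Deriv Γ b

namespace CWAux

open Deriv

theorem weak {Γ Γ' : Set Fm} {a : Fm} (hs : Γ ⊆ Γ') (h : Deriv Γ a) : Deriv Γ' a := by
  induction h with
  | hyp h => exact hyp (hs h)
  | a1 a b => exact a1 a b
  | a2 a b c => exact a2 a b c
  | a3 a b => exact a3 a b
  | a4 a b => exact a4 a b
  | a5 a b => exact a5 a b
  | a6 a b => exact a6 a b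
  | a7 a b => exact a7 a b
  | a8 a b c => exact a8 a b c
  | a9 a => exact a9 a
  | a10 a => exact a10 a
  | mp _ _ ih1 ih2 => exact mp ih1 ih2

theorem did {Γ : Set Fm} (a : Fm) : Deriv Γ (a.imp a) :=
  mp (mp (a2 a (a.imp a) a) (a1 a (a.imp a))) (a1 a a)

/-- Deduction theorem. -/
theorem ded {Γ : Set Fm} {a b : Fm} (h : Deriv (insert a Γ) b) : Deriv Γ (a.imp b) := by
  induction h with
  | @hyp c h =>
    rcases h with h | h
    · rw [h]; exact did a
    · exact mp (a1 c a) (hyp h)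
  | a1 x y => exact mp (a1 _ a) (a1 x y)
  | a2 x y z => exact mp (a1 _ a) (a2 x y z)
  | a3 x y => exact mp (a1 _ a) (a3 x y)
  | a4 x y => exact mp (a1 _ a) (a4 x y)
  | a5 x y => exact mp (a1 _ a) (a5 x y)
  | a6 x y => exact mp (a1 _ a) (a6 x y)
  | a7 x y => exact mp (a1 _ a) (a7 x y)
  | a8 x y z => exact mp (a1 _ a) (a8 x y z)
  | a9 x => exact mp (a1 _ a) (a9 x)
  | a10 x => exact mp (a1 _ a) (a10 x)
  | @mp x y _ _ ih1 ih2 => exact mp (mp (a2 a x y) ih1) ih2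

theorem hyp0 {Γ : Set Fm} {a : Fm} : Deriv (insert a Γ) a := hyp (Set.mem_insert _ _)

theorem weak1 {Γ : Set Fm} {a b : Fm} (h : Deriv Γ b) : Deriv (insert a Γ) b :=
  weak (Set.subset_insert _ _) h

theorem imp_trans {Γ : Set Fm} {a b c : Fm} (h1 : Deriv Γ (a.imp b)) (h2 : Deriv Γ (b.imp c)) :
    Deriv Γ (a.imp c) :=
  ded (mp (weak1 h2) (mp (weak1 h1) hyp0))

theorem dle_inf {Γ : Set Fm} {a b c : Fm} (h1 : Deriv Γ (c.imp a)) (h2 : Deriv Γ (c.imp b)) :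
    Deriv Γ (c.imp (a.and b)) :=
  ded (mp (mp (a5 a b) (mp (weak1 h1) hyp0)) (mp (weak1 h2) hyp0))

theorem dsup_le {Γ : Set Fm} {a b c : Fm} (h1 : Deriv Γ (a.imp c)) (h2 : Deriv Γ (b.imp c)) :
    Deriv Γ ((a.or b).imp c) :=
  mp (mp (a8 a b c) h1) h2

theorem dhimp_iff {Γ : Set Fm} {a b c : Fm} :
    Deriv Γ (a.imp (b.imp c)) ↔ Deriv Γ ((a.and b).imp c) := by
  constructor
  · intro h
    exact ded (mp (mp (weak1 h) (mp (a3 a b) hyp0)) (mp (a4 a b) hyp0))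
  · intro h
    exact ded (ded (mp (weak1 (weak1 h)) (mp (mp (a5 a b) (weak1 hyp0)) hyp0)))

/-- The canonical theorem used as top element. -/
def θ : Fm := (Fm.var 0).imp (Fm.var 0)

theorem dθ {Γ : Set Fm} : Deriv Γ θ := did _

theorem dle_top {Γ : Set Fm} (a : Fm) : Deriv Γ (a.imp θ) := mp (a1 θ a) dθ

/-- Interderivability setoid over a fixed Γ. -/
def eqv (Γ : Set Fm) (a b : Fm) : Prop := Deriv Γ (a.imp b) ∧ Deriv Γ (b.imp a)

theorem eqv_equiv (Γ : Set Fm) : Equivalence (eqv Γ) where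
  refl a := ⟨did a, did a⟩
  symm h := ⟨h.2, h.1⟩
  trans h1 h2 := ⟨imp_trans h1.1 h2.1, imp_trans h2.2 h1.2⟩

def lindSetoid (Γ : Set Fm) : Setoid Fm := ⟨eqv Γ, eqv_equiv Γ⟩

/-- The Lindenbaum–Tarski algebra of `C_ω` relative to `Γ`. -/
def Lind (Γ : Set Fm) : Type := Quotient (lindSetoid Γ)

namespace Lind

variable {Γ : Set Fm}

def mk (a : Fm) : Lind Γ := Quotient.mk (lindSetoid Γ) a

theorem sound {a b : Fm} (h : eqv Γ a b) : (mk a : Lind Γ) = mk b := Quotient.sound h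

instance : LE (Lind Γ) :=
  ⟨Quotient.lift₂ (fun a b => Deriv Γ (a.imp b)) (by
    intro a b a' b' ha hb
    exact propext ⟨fun h => imp_trans (imp_trans ha.2 h) hb.1,
      fun h => imp_trans (imp_trans ha.1 h) hb.2⟩)⟩

theorem le_mk {a b : Fm} : (mk a : Lind Γ) ≤ mk b ↔ Deriv Γ (a.imp b) := Iff.rfl

instance : Min (Lind Γ) :=
  ⟨Quotient.map₂ Fm.and (by
    intro a a' ha b b' hb
    exact ⟨dle_inf (imp_trans (Deriv.a3 a b) ha.1) (imp_trans (Deriv.a4 a b) hb.1),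
      dle_inf (imp_trans (Deriv.a3 a' b') ha.2) (imp_trans (Deriv.a4 a' b') hb.2)⟩)⟩

instance : Max (Lind Γ) :=
  ⟨Quotient.map₂ Fm.or (by
    intro a a' ha b b' hb
    exact ⟨dsup_le (imp_trans ha.1 (Deriv.a6 a' b')) (imp_trans hb.1 (Deriv.a7 a' b')),
      dsup_le (imp_trans ha.2 (Deriv.a6 a b)) (imp_trans hb.2 (Deriv.a7 a b))⟩)⟩

theorem himp_congr {a a' b b' : Fm} (ha : eqv Γ a a') (hb : eqv Γ b b') :
    Deriv Γ ((a.imp b).imp (a'.imp b')) := by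
  refine ded (ded ?_)
  have h1 : Deriv (insert a' (insert (a.imp b) Γ)) a := Deriv.mp (weak1 (weak1 ha.2)) hyp0
  have h2 : Deriv (insert a' (insert (a.imp b) Γ)) b := Deriv.mp (weak1 hyp0) h1
  exact Deriv.mp (weak1 (weak1 hb.1)) h2

instance : HImp (Lind Γ) :=
  ⟨Quotient.map₂ Fm.imp (by
    intro a a' ha b b' hb
    exact ⟨himp_congr ha hb, himp_congr ⟨ha.2, ha.1⟩ ⟨hb.2, hb.1⟩⟩)⟩

instance : Top (Lind Γ) := ⟨mk θ⟩

theorem mk_inf (a b : Fm) : (mk (a.and b) : Lind Γ) = mk a ⊓ mk b := rfl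
theorem mk_sup (a b : Fm) : (mk (a.or b) : Lind Γ) = mk a ⊔ mk b := rfl
theorem mk_himp (a b : Fm) : (mk (a.imp b) : Lind Γ) = mk a ⇨ mk b := rfl

theorem mk_eq_top {a : Fm} : (mk a : Lind Γ) = ⊤ ↔ Deriv Γ a := by
  constructor
  · intro h
    have h' : eqv Γ a θ := Quotient.exact h
    exact Deriv.mp h'.2 dθ
  · intro h
    exact sound ⟨dle_top a, Deriv.mp (Deriv.a1 a θ) h⟩

instance : GeneralizedHeytingAlgebra (Lind Γ) where
  sup := (· ⊔ ·)
  inf := (· ⊓ ·)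
  top := ⊤
  himp := (· ⇨ ·)
  le_refl x := Quotient.inductionOn x fun a => did a
  le_trans x y z := Quotient.inductionOn₃ x y z fun a b c h1 h2 => imp_trans h1 h2
  le_antisymm x y := Quotient.inductionOn₂ x y fun a b h1 h2 => Quotient.sound ⟨h1, h2⟩
  inf_le_left x y := Quotient.inductionOn₂ x y fun a b => Deriv.a3 a b
  inf_le_right x y := Quotient.inductionOn₂ x y fun a b => Deriv.a4 a b
  le_inf x y z := Quotient.inductionOn₃ x y z fun a b c h1 h2 => dle_inf h1 h2
  le_sup_left x y := Quotient.inductionOn₂ x y fun a b => Deriv.a6 a b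
  le_sup_right x y := Quotient.inductionOn₂ x y fun a b => Deriv.a7 a b
  sup_le x y z := Quotient.inductionOn₃ x y z fun a b c h1 h2 => dsup_le h1 h2
  le_top x := Quotient.inductionOn x fun a => dle_top a
  le_himp_iff x y z := Quotient.inductionOn₃ x y z fun a b c => dhimp_iff

end Lind

end CWAux

/-- A Fidel structure (`C_ω`-structure) over a generalized Heyting algebra `A`:
for each `x ∈ A`, `N x` is a nonempty set of "possible negations" of `x` such
that `x ⊔ y = ⊤` for every `y ∈ N x` and, for every `y ∈ N x`, there is
`z ∈ N y` with `z ≤ x`. -/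
structure FidelStr (A : Type u) [GeneralizedHeytingAlgebra A] where
  N : A → Set A
  nonempty : ∀ x : A, (N x).Nonempty
  sup_eq_top : ∀ x : A, ∀ y ∈ N x, x ⊔ y = ⊤
  dneg : ∀ x : A, ∀ y ∈ N x, ∃ z ∈ N y, z ≤ x

/-- A `C_ω`-valuation on a Fidel structure: a map from formulas to `A` which is
a homomorphism for `∧`, `∨`, `→` and satisfies `v(¬α) ∈ N (v α)` and
`v(¬¬α) ≤ v(α)`. -/
def IsVal {A : Type u} [GeneralizedHeytingAlgebra A] (F : FidelStr A) (v : Fm → A) : Prop :=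
  (∀ a b : Fm, v (a.and b) = v a ⊓ v b) ∧
    (∀ a b : Fm, v (a.or b) = v a ⊔ v b) ∧
    (∀ a b : Fm, v (a.imp b) = v a ⇨ v b) ∧
    (∀ a : Fm, v a.neg ∈ F.N (v a)) ∧
    (∀ a : Fm, v a.neg.neg ≤ v a)


section Soundness
open CWAux

variable {A : Type u} [GeneralizedHeytingAlgebra A]

theorem hey2 (a b c : A) : a ⇨ (b ⇨ c) ≤ (a ⇨ b) ⇨ (a ⇨ c) := by
  rw [le_himp_iff, le_himp_iff]
  calc ((a ⇨ (b ⇨ c)) ⊓ (a ⇨ b)) ⊓ a ≤ (b ⇨ c) ⊓ b :=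
        le_inf (le_trans (inf_le_inf_right a inf_le_left) himp_inf_le)
          (le_trans (inf_le_inf_right a inf_le_right) himp_inf_le)
    _ ≤ c := himp_inf_le

theorem hey8 (a b c : A) : a ⇨ c ≤ (b ⇨ c) ⇨ ((a ⊔ b) ⇨ c) := by
  rw [le_himp_iff, le_himp_iff, inf_sup_left]
  apply sup_le
  · exact le_trans (inf_le_inf_right a inf_le_left) himp_inf_le
  · exact le_trans (inf_le_inf_right b inf_le_right) himp_inf_le

theorem soundness {Γ : Set Fm} {α : Fm} (h : Deriv Γ α) (F : FidelStr A) (v : Fm → A)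
    (hv : IsVal F v) (hΓ : ∀ β ∈ Γ, v β = ⊤) : v α = ⊤ := by
  obtain ⟨hand, hor, hi, hneg, hdn⟩ := hv
  induction h with
  | hyp h => exact hΓ _ h
  | a1 a b =>
    simp only [hi]; rw [himp_eq_top_iff, le_himp_iff]
    exact inf_le_left
  | a2 a b c =>
    simp only [hi]; rw [himp_eq_top_iff]
    exact hey2 _ _ _
  | a3 a b => rw [hi, hand, himp_eq_top_iff]; exact inf_le_left
  | a4 a b => rw [hi, hand, himp_eq_top_iff]; exact inf_le_right
  | a5 a b =>
    simp only [hi, hand]; rw [himp_eq_top_iff, le_himp_iff]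
  | a6 a b => rw [hi, hor, himp_eq_top_iff]; exact le_sup_left
  | a7 a b => rw [hi, hor, himp_eq_top_iff]; exact le_sup_right
  | a8 a b c =>
    simp only [hi, hor]; rw [himp_eq_top_iff]
    exact hey8 _ _ _
  | a9 a => rw [hor]; exact F.sup_eq_top _ _ (hneg a)
  | a10 a => rw [hi, himp_eq_top_iff]; exact hdn a
  | @mp a b _ _ ih1 ih2 =>
    have h3 : v (a.imp b) ⊓ v a ≤ v b := by rw [hi]; exact himp_inf_le
    rw [ih1, ih2, inf_idem] at h3
    exact top_le_iff.1 h3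

end Soundness

section Completeness
open CWAux

variable {Γ : Set Fm}

instance : Top (ULift.{u} (Lind Γ)) := ⟨⟨⊤⟩⟩
instance : HImp (ULift.{u} (Lind Γ)) := ⟨fun x y => ⟨x.down ⇨ y.down⟩⟩

instance : GeneralizedHeytingAlgebra (ULift.{u} (Lind Γ)) :=
  ULift.down_injective.generalizedHeytingAlgebra _ Iff.rfl Iff.rfl (fun _ _ => rfl) (fun _ _ => rfl) rfl
    (fun _ _ => rfl)

def canF (Γ : Set Fm) : FidelStr (ULift.{u} (Lind Γ)) where
  N x := {y | ∃ b : Fm, x = ⟨Lind.mk b⟩ ∧ y = ⟨Lind.mk b.neg⟩}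
  nonempty x := by
    obtain ⟨b, hb⟩ := Quotient.exists_rep x.down
    exact ⟨⟨Lind.mk b.neg⟩, b, by cases x; exact congrArg ULift.up hb.symm, rfl⟩
  sup_eq_top x y hy := by
    obtain ⟨b, rfl, rfl⟩ := hy
    have : (Lind.mk (b.or b.neg) : Lind Γ) = ⊤ := Lind.mk_eq_top.2 (Deriv.a9 b)
    exact congrArg ULift.up this
  dneg x y hy := by
    obtain ⟨b, rfl, rfl⟩ := hy
    refine ⟨⟨Lind.mk b.neg.neg⟩, ⟨b.neg, rfl, rfl⟩, ?_⟩
    show (Lind.mk b.neg.neg : Lind Γ) ≤ Lind.mk b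
    exact Deriv.a10 b

def canV (Γ : Set Fm) : Fm → ULift.{u} (Lind Γ) := fun a => ⟨Lind.mk a⟩

theorem canV_isVal : IsVal (canF Γ) (canV.{u} Γ) := by
  refine ⟨fun a b => rfl, fun a b => rfl, fun a b => rfl, fun a => ⟨a, rfl, rfl⟩, fun a => ?_⟩
  show (Lind.mk a.neg.neg : Lind Γ) ≤ Lind.mk a
  exact Deriv.a10 a

end Completeness

/-- Adequacy theorem for `C_ω` with respect to Fidel semantics: `Γ ⊢ α` in
`C_ω` if and only if, for every `C_ω`-structure `⟨A, N⟩` and every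
`C_ω`-valuation `v` on it with `v(β) = 1` for all `β ∈ Γ`, one has `v(α) = 1`. -/
theorem comega_adequacy (Γ : Set Fm) (α : Fm) :
    Deriv Γ α ↔
      ∀ (A : Type u) [GeneralizedHeytingAlgebra A] (F : FidelStr A) (v : Fm → A),
        IsVal F v → (∀ β ∈ Γ, v β = ⊤) → v α = ⊤ := by
  constructor
  · intro h A _ F v hv hΓ
    exact soundness h F v hv hΓ
  · intro h
    have hα := h (ULift.{u} (CWAux.Lind Γ)) (canF Γ) (canV.{u} Γ) canV_isVal
      (fun β hβ => congrArg ULift.up (CWAux.Lind.mk_eq_top.2 (Deriv.hyp hβ)))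
    exact CWAux.Lind.mk_eq_top.1 (congrArg ULift.down hα)
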